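/- With ψ_T the parabolic heat-type kernel on ℝ² satisfying ψ_T(x₁,x₂) = T^{-3/4} ψ₁(x₁/T^{1/4}, x₂/T^{1/2}) for a Schwartz function ψ₁, one has for every α ∈ (0,1): sup_{T≤1} (T^{1/4})^{1−α} ‖[x₁,(·)_T] f‖_∞ ≲ sup_{T≤1} (T^{1/4})^{2−α} ‖f_T‖_∞, where the implicit constant depends only on ψ₁ and α. -/

import Mathlib

open MeasureTheory

/-- Parabolic rescaling: `ψ_T(x₁,x₂) = T^{-3/4} ψ(x₁/T^{1/4}, x₂/T^{1/2})`. -/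
noncomputable def pker (ψ : ℝ × ℝ → ℝ) (T : ℝ) (x : ℝ × ℝ) : ℝ :=
  T ^ (-(3 / 4 : ℝ)) * ψ (x.1 / T ^ ((1 : ℝ) / 4), x.2 / T ^ ((1 : ℝ) / 2))

/-- Convolution on `ℝ²`. -/
noncomputable def conv (g f : ℝ × ℝ → ℝ) (x : ℝ × ℝ) : ℝ :=
  ∫ y : ℝ × ℝ, g (x - y) * f y

section helpers

lemma prodsmul_left (c : ENNReal) (μ ν : Measure ℝ) [SFinite μ] [SFinite ν] :
    (c • μ).prod ν = c • (μ.prod ν) := by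
  ext s hs
  rw [Measure.prod_apply hs, Measure.smul_apply, Measure.prod_apply hs,
    lintegral_smul_measure, smul_eq_mul]

lemma prodsmul_right (c : ENNReal) (μ ν : Measure ℝ) [SFinite μ] [SFinite ν] :
    μ.prod (c • ν) = c • (μ.prod ν) := by
  ext s hs
  rw [Measure.prod_apply hs, Measure.smul_apply, Measure.prod_apply hs, smul_eq_mul,
    ← lintegral_const_mul c (measurable_measure_prodMk_left hs)]
  simp [Measure.smul_apply, mul_comm]

lemma map_scale (c d : ℝ) (hc : 0 < c) (hd : 0 < d) :
    Measure.map (fun x : ℝ × ℝ => (x.1 / c, x.2 / d)) volume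
      = ENNReal.ofReal (c * d) • volume := by
  have h1 : (fun x : ℝ × ℝ => (x.1 / c, x.2 / d))
      = Prod.map (fun a => c⁻¹ * a) (fun a => d⁻¹ * a) := by
    funext x; simp [Prod.map, div_eq_inv_mul]
  rw [h1, MeasureTheory.Measure.volume_eq_prod,
    ← Measure.map_prod_map _ _ (measurable_const_mul c⁻¹) (measurable_const_mul d⁻¹),
    Real.map_volume_mul_left (inv_ne_zero hc.ne'), Real.map_volume_mul_left (inv_ne_zero hd.ne'),
    prodsmul_left, prodsmul_right]
  rw [smul_smul, inv_inv, inv_inv, abs_of_pos hc, abs_of_pos hd,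
    ← ENNReal.ofReal_mul hc.le, ← MeasureTheory.Measure.volume_eq_prod]

lemma integral_scale (c d : ℝ) (hc : 0 < c) (hd : 0 < d) (g : ℝ × ℝ → ℝ)
    (hg : Continuous g) :
    ∫ x : ℝ × ℝ, g (x.1 / c, x.2 / d) = (c * d) * ∫ x, g x := by
  have hm : AEMeasurable (fun x : ℝ × ℝ => (x.1 / c, x.2 / d)) volume := by fun_prop
  have := MeasureTheory.integral_map (f := g) hm
    (by rw [map_scale c d hc hd]; exact hg.aestronglyMeasurable)
  rw [← this, map_scale c d hc hd, integral_smul_measure, ENNReal.toReal_ofReal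
    (by positivity), smul_eq_mul]

lemma integrable_scale (c d : ℝ) (hc : 0 < c) (hd : 0 < d) (g : ℝ × ℝ → ℝ)
    (hg : Continuous g) (hgi : Integrable g) :
    Integrable (fun x : ℝ × ℝ => g (x.1 / c, x.2 / d)) := by
  have hm : AEMeasurable (fun x : ℝ × ℝ => (x.1 / c, x.2 / d)) volume := by fun_prop
  have h2 : Integrable g (Measure.map (fun x : ℝ × ℝ => (x.1 / c, x.2 / d)) volume) := by
    rw [map_scale c d hc hd]
    exact (integrable_smul_measure (by simp [(mul_pos hc hd).ne']; positivity) (by simp)).2 hgi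
  exact (integrable_map_measure hg.aestronglyMeasurable hm).1 h2

variable (ψ₁ : SchwartzMap (ℝ × ℝ) ℝ) {T : ℝ}

lemma pker_continuous : Continuous (pker (⇑ψ₁) T) := by
  unfold pker
  exact continuous_const.mul (ψ₁.continuous.comp (by fun_prop))

lemma pker_integrable (hT : 0 < T) : Integrable (pker (⇑ψ₁) T) := by
  have : pker (⇑ψ₁) T = fun x : ℝ × ℝ =>
      (fun u : ℝ × ℝ => T ^ (-(3/4:ℝ)) * ψ₁ u) (x.1 / T ^ ((1:ℝ)/4), x.2 / T ^ ((1:ℝ)/2)) := rfl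
  rw [this]
  exact integrable_scale _ _ (Real.rpow_pos_of_pos hT _) (Real.rpow_pos_of_pos hT _)
    _ (continuous_const.mul ψ₁.continuous) (ψ₁.integrable.const_mul _)

lemma mul_fst_schwartz_integrable :
    Integrable (fun u : ℝ × ℝ => u.1 * ψ₁ u) := by
  refine (((ψ₁.integrable_pow_mul volume 1)).const_mul 1).mono'
    ((continuous_fst.mul ψ₁.continuous).aestronglyMeasurable) ?_
  filter_upwards with u
  simp only [one_mul, pow_one, norm_mul]
  exact mul_le_mul_of_nonneg_right (norm_fst_le u) (norm_nonneg _)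

lemma mul_fst_pker_eq (hT : 0 < T) : (fun z : ℝ × ℝ => z.1 * pker (⇑ψ₁) T z) =
    fun z : ℝ × ℝ => (fun u : ℝ × ℝ => (T ^ ((1:ℝ)/4) * u.1) * (T ^ (-(3/4:ℝ)) * ψ₁ u))
      (z.1 / T ^ ((1:ℝ)/4), z.2 / T ^ ((1:ℝ)/2)) := by
  funext z
  have hc : (T ^ ((1:ℝ)/4)) ≠ 0 := (Real.rpow_pos_of_pos hT _).ne'
  simp only [pker]
  field_simp

lemma mul_fst_pker_integrable (hT : 0 < T) :
    Integrable (fun z : ℝ × ℝ => z.1 * pker (⇑ψ₁) T z) := by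
  rw [mul_fst_pker_eq ψ₁ hT]
  have hg : Integrable (fun u : ℝ × ℝ =>
      (T ^ ((1:ℝ)/4) * u.1) * (T ^ (-(3/4:ℝ)) * ψ₁ u)) :=
    ((mul_fst_schwartz_integrable ψ₁).const_mul
      (T ^ ((1:ℝ)/4) * T ^ (-(3/4:ℝ)))).congr (Filter.Eventually.of_forall fun u => by ring)
  exact integrable_scale _ _ (Real.rpow_pos_of_pos hT _) (Real.rpow_pos_of_pos hT _) _
    ((continuous_const.mul continuous_fst).mul (continuous_const.mul ψ₁.continuous)) hg

lemma integral_abs_mul_fst_pker (hT : 0 < T) :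
    ∫ z : ℝ × ℝ, |z.1 * pker (⇑ψ₁) T z| =
      T ^ ((1:ℝ)/4) * ∫ u : ℝ × ℝ, |u.1 * ψ₁ u| := by
  have h1 : (fun z : ℝ × ℝ => |z.1 * pker (⇑ψ₁) T z|) =
      fun z : ℝ × ℝ => (fun u : ℝ × ℝ => |(T ^ ((1:ℝ)/4) * u.1) * (T ^ (-(3/4:ℝ)) * ψ₁ u)|)
        (z.1 / T ^ ((1:ℝ)/4), z.2 / T ^ ((1:ℝ)/2)) := by
    have := mul_fst_pker_eq ψ₁ hT
    funext z
    simp only [congrFun this z]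
  rw [h1, integral_scale _ _ (Real.rpow_pos_of_pos hT _) (Real.rpow_pos_of_pos hT _)
    (fun u : ℝ × ℝ => |(T ^ ((1:ℝ)/4) * u.1) * (T ^ (-(3/4:ℝ)) * ψ₁ u)|)
    (((continuous_const.mul continuous_fst).mul (continuous_const.mul ψ₁.continuous)).abs)]
  have h2 : ∀ u : ℝ × ℝ, |(T ^ ((1:ℝ)/4) * u.1) * (T ^ (-(3/4:ℝ)) * ψ₁ u)| =
      (T ^ ((1:ℝ)/4) * T ^ (-(3/4:ℝ))) * |u.1 * ψ₁ u| := by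
    intro u
    rw [abs_mul, abs_mul, abs_mul, abs_of_pos (Real.rpow_pos_of_pos hT _),
      abs_of_pos (Real.rpow_pos_of_pos hT _), abs_mul]
    ring
  simp only [h2]
  rw [integral_const_mul]
  have h3 : T ^ ((1:ℝ)/4) * T ^ ((1:ℝ)/2) * (T ^ ((1:ℝ)/4) * T ^ (-(3/4:ℝ))) = T ^ ((1:ℝ)/4) := by
    rw [← Real.rpow_add hT, ← Real.rpow_add hT, ← Real.rpow_add hT]
    norm_num
  rw [← mul_assoc, h3]

lemma periodic_bounded (f : ℝ × ℝ → ℝ) (hf : Continuous f)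
    (hper : ∀ x : ℝ × ℝ, ∀ m n : ℤ, f (x.1 + m, x.2 + n) = f x) :
    ∃ B : ℝ, 0 ≤ B ∧ ∀ x, |f x| ≤ B := by
  obtain ⟨C, hC⟩ := (isCompact_Icc.prod isCompact_Icc :
    IsCompact ((Set.Icc (0:ℝ) 1) ×ˢ (Set.Icc (0:ℝ) 1))).exists_bound_of_continuousOn
      hf.continuousOn
  refine ⟨max C 0, le_max_right _ _, fun x => ?_⟩
  have hx : f x = f (Int.fract x.1, Int.fract x.2) := by
    have h := hper (Int.fract x.1, Int.fract x.2) ⌊x.1⌋ ⌊x.2⌋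
    simp only [Int.fract_add_floor] at h
    rw [← h]
  rw [hx]
  calc |f (Int.fract x.1, Int.fract x.2)| ≤ C :=
        hC _ ⟨⟨Int.fract_nonneg _, (Int.fract_lt_one _).le⟩,
          ⟨Int.fract_nonneg _, (Int.fract_lt_one _).le⟩⟩
    _ ≤ max C 0 := le_max_left _ _

/-- The shear `(u, w) ↦ (u + w, w)` as a measurable equivalence. -/
def shearE : ((ℝ × ℝ) × (ℝ × ℝ)) ≃ᵐ ((ℝ × ℝ) × (ℝ × ℝ)) where
  toEquiv := ⟨fun q => (q.1 + q.2, q.2), fun p => (p.1 - p.2, p.2),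
    fun q => by simp, fun p => by simp⟩
  measurable_toFun := (measurable_fst.add measurable_snd).prodMk measurable_snd
  measurable_invFun := (measurable_fst.sub measurable_snd).prodMk measurable_snd

lemma shearE_mp : MeasurePreserving (⇑shearE)
    (volume : Measure ((ℝ × ℝ) × (ℝ × ℝ))) volume := by
  rw [MeasureTheory.Measure.volume_eq_prod]
  exact measurePreserving_add_prod volume volume

end helpers

set_option maxHeartbeats 2000000 in
theorem stmt10 (ψ₁ : SchwartzMap (ℝ × ℝ) ℝ) (α : ℝ) (hα : 0 < α ∧ α < 1)
    (hsemi : ∀ T : ℝ, 0 < T → ∀ x : ℝ × ℝ,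
      (∫ y : ℝ × ℝ, pker (⇑ψ₁) (T / 2) (x - y) * pker (⇑ψ₁) (T / 2) y) =
        pker (⇑ψ₁) T x) :
    ∃ C : ℝ, 0 < C ∧ ∀ f : ℝ × ℝ → ℝ, Continuous f →
      (∀ x : ℝ × ℝ, ∀ m n : ℤ, f (x.1 + m, x.2 + n) = f x) →
      ∀ N₀ : ℝ, 0 ≤ N₀ →
      (∀ T : ℝ, 0 < T → T ≤ 1 → ∀ x : ℝ × ℝ,
        |conv (pker (⇑ψ₁) T) f x| ≤ N₀ * (T ^ ((1 : ℝ) / 4)) ^ (α - 2)) →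
      ∀ T : ℝ, 0 < T → T ≤ 1 → ∀ x : ℝ × ℝ,
        |x.1 * conv (pker (⇑ψ₁) T) f x - conv (pker (⇑ψ₁) T) (fun y => y.1 * f y) x| ≤
          C * N₀ * (T ^ ((1 : ℝ) / 4)) ^ (α - 1) := by
  set M₁ : ℝ := ∫ u : ℝ × ℝ, |u.1 * ψ₁ u| with hM₁def
  have hM₁ : 0 ≤ M₁ := integral_nonneg fun u => abs_nonneg _
  refine ⟨4 * (M₁ + 1), by positivity, ?_⟩
  intro f hfc hper N₀ hN₀ hN T hT hT1 x
  obtain ⟨B, hB0, hB⟩ := periodic_bounded f hfc hper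
  have hT2 : 0 < T / 2 := by linarith
  have hT21 : T / 2 ≤ 1 := by linarith
  set K : (ℝ × ℝ) → ℝ := pker (⇑ψ₁) T with hK
  set K' : (ℝ × ℝ) → ℝ := pker (⇑ψ₁) (T / 2) with hK'
  have hKc : Continuous K := pker_continuous ψ₁
  have hK'c : Continuous K' := pker_continuous ψ₁
  have hKi : Integrable K := pker_integrable ψ₁ hT
  have hK'i : Integrable K' := pker_integrable ψ₁ hT2
  have hKi1 : Integrable (fun z : ℝ × ℝ => z.1 * K z) := mul_fst_pker_integrable ψ₁ hT
  have hK'i1 : Integrable (fun z : ℝ × ℝ => z.1 * K' z) := mul_fst_pker_integrable ψ₁ hT2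
  have hfm : AEStronglyMeasurable f (volume : Measure (ℝ × ℝ)) := hfc.aestronglyMeasurable
  have hfb : ∃ c, ∀ y : ℝ × ℝ, ‖f y‖ ≤ c := ⟨B, fun y => hB y⟩
  -- Step 1 : commutator as a single integral
  have hint1 : Integrable (fun y : ℝ × ℝ => K (x - y) * f y) := by
    have h := (hKi.comp_sub_left x).bdd_mul hfm (Filter.Eventually.of_forall fun y => hB y)
    exact h.congr (Filter.Eventually.of_forall fun y => mul_comm _ _)
  have hint2 : Integrable (fun y : ℝ × ℝ => (x.1 - y.1) * K (x - y) * f y) := by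
    have h0 : Integrable (fun y : ℝ × ℝ => (x - y).1 * K (x - y)) := hKi1.comp_sub_left x
    have h := h0.bdd_mul hfm (Filter.Eventually.of_forall fun y => hB y)
    exact h.congr (Filter.Eventually.of_forall fun y => by
      simp only [Prod.fst_sub]; ring)
  have hint3 : Integrable (fun y : ℝ × ℝ => y.1 * (K (x - y) * f y)) := by
    have he : (fun y : ℝ × ℝ => y.1 * (K (x - y) * f y))
        = fun y => x.1 * (K (x - y) * f y) - (x.1 - y.1) * K (x - y) * f y := by
      funext y; ring
    rw [he]
    exact (hint1.const_mul _).sub hint2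
  have e1 : x.1 * conv K f x - conv K (fun y => y.1 * f y) x
      = ∫ y : ℝ × ℝ, (x.1 - y.1) * K (x - y) * f y := by
    have c1 : conv K f x = ∫ y : ℝ × ℝ, K (x - y) * f y := rfl
    have c2 : conv K (fun y => y.1 * f y) x = ∫ y : ℝ × ℝ, y.1 * (K (x - y) * f y) := by
      rw [conv]; congr 1; funext y; ring
    rw [c1, c2, ← integral_const_mul, ← integral_sub (hint1.const_mul _) hint3]
    congr 1; funext y; ring
  have e2 : (∫ y : ℝ × ℝ, (x.1 - y.1) * K (x - y) * f y)
      = ∫ z : ℝ × ℝ, z.1 * K z * f (x - z) := by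
    rw [← integral_sub_left_eq_self (fun z : ℝ × ℝ => z.1 * K z * f (x - z)) volume x]
    congr 1; funext y
    simp [sub_sub_cancel]
  -- Step 2 : semigroup splitting
  set F : (ℝ × ℝ) → (ℝ × ℝ) → ℝ :=
    fun z w => (z.1 * f (x - z)) * (K' (z - w) * K' w) with hF0
  have e3 : (∫ z : ℝ × ℝ, z.1 * K z * f (x - z)) = ∫ z : ℝ × ℝ, ∫ w : ℝ × ℝ, F z w := by
    congr 1; funext z
    calc z.1 * K z * f (x - z) = (z.1 * f (x - z)) * K z := by ring
      _ = (z.1 * f (x - z)) * ∫ w : ℝ × ℝ, K' (z - w) * K' w := by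
          rw [hK, ← hsemi T hT z]
      _ = ∫ w : ℝ × ℝ, F z w := (integral_const_mul _ _).symm
  -- integrability on the product space
  have hprod : Integrable (fun q : (ℝ × ℝ) × (ℝ × ℝ) =>
      |q.1.1 * K' q.1| * |K' q.2| + |K' q.1| * |q.2.1 * K' q.2|)
      (volume : Measure ((ℝ × ℝ) × (ℝ × ℝ))) := by
    rw [MeasureTheory.Measure.volume_eq_prod]
    exact (hK'i1.abs.mul_prod hK'i.abs).add (hK'i.abs.mul_prod hK'i1.abs)
  have hGint : Integrable (fun p : (ℝ × ℝ) × (ℝ × ℝ) =>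
      B * (|(p.1 - p.2).1 * K' (p.1 - p.2)| * |K' p.2|
        + |K' (p.1 - p.2)| * |p.2.1 * K' p.2|)) (volume : Measure ((ℝ × ℝ) × (ℝ × ℝ))) := by
    have mp := measurePreserving_sub_prod (volume : Measure (ℝ × ℝ)) volume
    have h1 := hprod.const_mul B
    rw [MeasureTheory.Measure.volume_eq_prod] at h1
    rw [← mp.map_eq] at h1
    have h2 := h1.comp_measurable ((measurable_fst.sub measurable_snd).prodMk measurable_snd)
    rw [← MeasureTheory.Measure.volume_eq_prod] at h2
    exact h2.congr (Filter.Eventually.of_forall fun p => rfl)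
  have habs : ∀ z w : ℝ × ℝ, |F z w| ≤
      B * (|(z - w).1 * K' (z - w)| * |K' w| + |K' (z - w)| * |w.1 * K' w|) := by
    intro z w
    have hz : |z.1| ≤ |(z - w).1| + |w.1| := by
      have : z.1 = (z - w).1 + w.1 := by simp
      rw [this]; exact abs_add_le _ _
    have h1 : |F z w| = (|z.1| * |f (x - z)|) * (|K' (z - w)| * |K' w|) := by
      rw [hF0]; simp only [abs_mul]
    rw [h1, abs_mul, abs_mul]
    have hfz : |f (x - z)| ≤ B := hB _
    calc |z.1| * |f (x - z)| * (|K' (z - w)| * |K' w|)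
        ≤ ((|(z - w).1| + |w.1|) * B) * (|K' (z - w)| * |K' w|) := by
          apply mul_le_mul_of_nonneg_right _ (by positivity)
          exact mul_le_mul hz hfz (abs_nonneg _) (by positivity)
      _ = B * (|(z - w).1| * |K' (z - w)| * |K' w| + |K' (z - w)| * (|w.1| * |K' w|)) := by
          ring
  have hF : Integrable (Function.uncurry F) (volume : Measure ((ℝ × ℝ) × (ℝ × ℝ))) := by
    refine hGint.mono' ?_ ?_
    · apply Continuous.aestronglyMeasurable
      apply Continuous.mul
      · exact (continuous_fst.fst.mul (hfc.comp (continuous_const.sub continuous_fst)))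
      · exact (hK'c.comp (continuous_fst.sub continuous_snd)).mul (hK'c.comp continuous_snd)
    · filter_upwards with p
      simpa [Real.norm_eq_abs, Function.uncurry_def] using habs p.1 p.2
  have e4 : (∫ z : ℝ × ℝ, ∫ w : ℝ × ℝ, F z w)
      = ∫ p : (ℝ × ℝ) × (ℝ × ℝ), F p.1 p.2 := by
    rw [MeasureTheory.Measure.volume_eq_prod] at hF
    have := MeasureTheory.integral_integral hF
    rw [this, ← MeasureTheory.Measure.volume_eq_prod]
  -- change of variables by the shear
  set H₁ : (ℝ × ℝ) × (ℝ × ℝ) → ℝ :=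
    fun q => (q.1.1 * f (x - q.1 - q.2)) * (K' q.1 * K' q.2) with hH₁def
  set H₂ : (ℝ × ℝ) × (ℝ × ℝ) → ℝ :=
    fun q => (q.2.1 * f (x - q.1 - q.2)) * (K' q.1 * K' q.2) with hH₂def
  have e5 : (∫ p : (ℝ × ℝ) × (ℝ × ℝ), F p.1 p.2)
      = ∫ q : (ℝ × ℝ) × (ℝ × ℝ), (H₁ q + H₂ q) := by
    rw [← shearE_mp.integral_comp' (fun p : (ℝ × ℝ) × (ℝ × ℝ) => F p.1 p.2)]
    congr 1; funext q
    show F (q.1 + q.2) q.2 = _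
    rw [hF0, hH₁def, hH₂def]
    simp only [Prod.fst_add, add_sub_cancel_right, sub_add_eq_sub_sub]
    ring
  have hH₁ : Integrable H₁ (volume : Measure ((ℝ × ℝ) × (ℝ × ℝ))) := by
    have hGi : Integrable (fun q : (ℝ × ℝ) × (ℝ × ℝ) =>
        B * (|q.1.1 * K' q.1| * |K' q.2|)) (volume : Measure ((ℝ × ℝ) × (ℝ × ℝ))) := by
      rw [MeasureTheory.Measure.volume_eq_prod]
      exact (hK'i1.abs.mul_prod hK'i.abs).const_mul B
    refine hGi.mono' ?_ ?_
    · apply Continuous.aestronglyMeasurable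
      exact (continuous_fst.fst.mul (hfc.comp
        ((continuous_const.sub continuous_fst).sub continuous_snd))).mul
        ((hK'c.comp continuous_fst).mul (hK'c.comp continuous_snd))
    · filter_upwards with q
      rw [hH₁def]
      simp only [Real.norm_eq_abs, abs_mul]
      calc |q.1.1| * |f (x - q.1 - q.2)| * (|K' q.1| * |K' q.2|)
          ≤ |q.1.1| * B * (|K' q.1| * |K' q.2|) := by
            apply mul_le_mul_of_nonneg_right _ (by positivity)
            exact mul_le_mul_of_nonneg_left (hB _) (abs_nonneg _)
        _ = B * (|q.1.1| * |K' q.1| * |K' q.2|) := by ring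
  have hH₂ : Integrable H₂ (volume : Measure ((ℝ × ℝ) × (ℝ × ℝ))) := by
    have hGi : Integrable (fun q : (ℝ × ℝ) × (ℝ × ℝ) =>
        B * (|K' q.1| * |q.2.1 * K' q.2|)) (volume : Measure ((ℝ × ℝ) × (ℝ × ℝ))) := by
      rw [MeasureTheory.Measure.volume_eq_prod]
      exact (hK'i.abs.mul_prod hK'i1.abs).const_mul B
    refine hGi.mono' ?_ ?_
    · apply Continuous.aestronglyMeasurable
      exact (continuous_snd.fst.mul (hfc.comp
        ((continuous_const.sub continuous_fst).sub continuous_snd))).mul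
        ((hK'c.comp continuous_fst).mul (hK'c.comp continuous_snd))
    · filter_upwards with q
      rw [hH₂def]
      simp only [Real.norm_eq_abs, abs_mul]
      calc |q.2.1| * |f (x - q.1 - q.2)| * (|K' q.1| * |K' q.2|)
          ≤ |q.2.1| * B * (|K' q.1| * |K' q.2|) := by
            apply mul_le_mul_of_nonneg_right _ (by positivity)
            exact mul_le_mul_of_nonneg_left (hB _) (abs_nonneg _)
        _ = B * (|K' q.1| * (|q.2.1| * |K' q.2|)) := by ring
  have e6 : (∫ q : (ℝ × ℝ) × (ℝ × ℝ), (H₁ q + H₂ q))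
      = (∫ q, H₁ q) + ∫ q, H₂ q := integral_add hH₁ hH₂
  -- inner convolution identity
  have hconv : ∀ v : ℝ × ℝ, conv K' f (x - v) = ∫ w : ℝ × ℝ, K' w * f (x - v - w) := by
    intro v
    rw [conv, ← integral_sub_left_eq_self
      (fun w : ℝ × ℝ => K' w * f (x - v - w)) volume (x - v)]
    congr 1; funext y
    simp [sub_sub_cancel]
  have e7 : (∫ q : (ℝ × ℝ) × (ℝ × ℝ), H₁ q)
      = ∫ u : ℝ × ℝ, (u.1 * K' u) * conv K' f (x - u) := by
    rw [MeasureTheory.Measure.volume_eq_prod] at hH₁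
    have h := MeasureTheory.integral_prod _ hH₁
    rw [MeasureTheory.Measure.volume_eq_prod, h]
    congr 1; funext u
    have : ∀ w : ℝ × ℝ, H₁ (u, w) = (u.1 * K' u) * (K' w * f (x - u - w)) := by
      intro w; rw [hH₁def]; ring
    simp only [this]
    rw [integral_const_mul, hconv u]
  have e8 : (∫ q : (ℝ × ℝ) × (ℝ × ℝ), H₂ q)
      = ∫ w : ℝ × ℝ, (w.1 * K' w) * conv K' f (x - w) := by
    rw [MeasureTheory.Measure.volume_eq_prod] at hH₂
    have h := MeasureTheory.integral_prod_symm _ hH₂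
    rw [MeasureTheory.Measure.volume_eq_prod, h]
    congr 1; funext w
    have : ∀ u : ℝ × ℝ, H₂ (u, w) = (w.1 * K' w) * (K' u * f (x - w - u)) := by
      intro u
      show (w.1 * f (x - u - w)) * (K' u * K' w) = (w.1 * K' w) * (K' u * f (x - w - u))
      rw [sub_right_comm]; ring
    simp only [this]
    rw [integral_const_mul, hconv w]
  -- the quantitative bound
  set s : ℝ := (T / 2) ^ ((1:ℝ)/4) with hs
  have hspos : 0 < s := Real.rpow_pos_of_pos hT2 _
  have hconvbd : ∀ v : ℝ × ℝ, |conv K' f (x - v)| ≤ N₀ * s ^ (α - 2) := by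
    intro v
    exact hN (T / 2) hT2 hT21 (x - v)
  have hQ : |∫ v : ℝ × ℝ, (v.1 * K' v) * conv K' f (x - v)|
      ≤ (s * M₁) * (N₀ * s ^ (α - 2)) := by
    calc |∫ v : ℝ × ℝ, (v.1 * K' v) * conv K' f (x - v)|
        ≤ ∫ v : ℝ × ℝ, |(v.1 * K' v) * conv K' f (x - v)| := by
          have h := norm_integral_le_integral_norm
            (f := fun v : ℝ × ℝ => (v.1 * K' v) * conv K' f (x - v)) (μ := volume)
          simp only [Real.norm_eq_abs] at h
          exact h
      _ ≤ ∫ v : ℝ × ℝ, |v.1 * K' v| * (N₀ * s ^ (α - 2)) := by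
          refine integral_mono_of_nonneg (Filter.Eventually.of_forall fun v => abs_nonneg _)
            (hK'i1.abs.mul_const _) (Filter.Eventually.of_forall fun v => ?_)
          show |(v.1 * K' v) * conv K' f (x - v)| ≤ |v.1 * K' v| * (N₀ * s ^ (α - 2))
          rw [abs_mul]
          exact mul_le_mul_of_nonneg_left (hconvbd v) (abs_nonneg _)
      _ = (∫ v : ℝ × ℝ, |v.1 * K' v|) * (N₀ * s ^ (α - 2)) := integral_mul_const _ _
      _ = (s * M₁) * (N₀ * s ^ (α - 2)) := by
          rw [hK', integral_abs_mul_fst_pker ψ₁ hT2, ← hs]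
  -- powers arithmetic
  have hpow1 : s * s ^ (α - 2) = s ^ (α - 1) := by
    have h : α - 1 = (α - 2) + 1 := by ring
    rw [h, Real.rpow_add_one hspos.ne']
    ring
  set t : ℝ := T ^ ((1:ℝ)/4) with ht
  have htpos : 0 < t := Real.rpow_pos_of_pos hT _
  have ht0 : 0 ≤ t ^ (α - 1) := Real.rpow_nonneg htpos.le _
  have hpow2 : s ^ (α - 1) ≤ 2 * t ^ (α - 1) := by
    have h2 : s = t / 2 ^ ((1:ℝ)/4) := by
      rw [hs, ht, Real.div_rpow hT.le (by norm_num : (0:ℝ) ≤ 2)]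
    have h3 : s ^ (α - 1) = t ^ (α - 1) / 2 ^ (((1:ℝ)/4) * (α - 1)) := by
      rw [h2, Real.div_rpow htpos.le (Real.rpow_nonneg (by norm_num) _),
        ← Real.rpow_mul (by norm_num : (0:ℝ) ≤ 2)]
    have hge : (1:ℝ)/2 ≤ 2 ^ (((1:ℝ)/4) * (α - 1)) := by
      have h4 : (2:ℝ) ^ (-(1:ℝ)) ≤ 2 ^ (((1:ℝ)/4) * (α - 1)) := by
        apply Real.rpow_le_rpow_of_exponent_le (by norm_num)
        nlinarith [hα.1]
      calc (1:ℝ)/2 = 2 ^ (-(1:ℝ)) := by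
            rw [Real.rpow_neg_one]; norm_num
        _ ≤ _ := h4
    rw [h3, div_le_iff₀ (by positivity)]
    nlinarith [ht0, hge, Real.rpow_pos_of_pos (show (0:ℝ) < 2 by norm_num)
      (((1:ℝ)/4) * (α - 1))]
  -- assemble
  have etot : x.1 * conv K f x - conv K (fun y => y.1 * f y) x
      = (∫ u : ℝ × ℝ, (u.1 * K' u) * conv K' f (x - u))
        + ∫ w : ℝ × ℝ, (w.1 * K' w) * conv K' f (x - w) := by
    rw [e1, e2, e3, e4, e5, e6, e7, e8]
  rw [etot]
  set Q : ℝ := ∫ u : ℝ × ℝ, (u.1 * K' u) * conv K' f (x - u) with hQdef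
  calc |Q + Q| ≤ |Q| + |Q| := abs_add_le _ _
    _ ≤ 2 * ((s * M₁) * (N₀ * s ^ (α - 2))) := by linarith [hQ]
    _ = 2 * M₁ * N₀ * (s * s ^ (α - 2)) := by ring
    _ = 2 * M₁ * N₀ * s ^ (α - 1) := by rw [hpow1]
    _ ≤ 2 * M₁ * N₀ * (2 * t ^ (α - 1)) := by
        apply mul_le_mul_of_nonneg_left hpow2 (by positivity)
    _ = 4 * M₁ * N₀ * t ^ (α - 1) := by ring
    _ ≤ 4 * (M₁ + 1) * N₀ * t ^ (α - 1) := by nlinarith [mul_nonneg hN₀ ht0]
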